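/- Let D = { x : Fin (N−1) → ℝ | ∀ i j, |x_i − x_j| ≤ ηΔ }. If ν is an N-node adversarial strategy with PA_N(ν) > 0, then ν(D) ≥ PA_N(ν) > 0, and the conditioned measure ν′ = ν(· ∩ D)/ν(D) satisfies PA_N(ν′) = PA_N(ν)/ν(D) ≥ PA_N(ν) and MSE_N(ν′) = MSE_N(ν). -/

import Mathlib

open MeasureTheory ProbabilityTheory

noncomputable section

def midN (N : ℕ) (p : ℝ × (Fin (N-1) → ℝ)) : ℝ :=
  (max p.1 (⨆ i, p.2 i) + min p.1 (⨅ i, p.2 i)) / 2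

def accN (N : ℕ) (η Δ : ℝ) : Set (ℝ × (Fin (N-1) → ℝ)) :=
  {p | max p.1 (⨆ i, p.2 i) - min p.1 (⨅ i, p.2 i) ≤ η * Δ}

def PA_N (N : ℕ) (η Δ : ℝ) (μ : Measure ℝ) (ν : Measure (Fin (N-1) → ℝ)) : ℝ :=
  ((μ.prod ν) (accN N η Δ)).toReal

def MSE_N (N : ℕ) (η Δ : ℝ) (μ : Measure ℝ) (ν : Measure (Fin (N-1) → ℝ)) : ℝ :=
  ∫ p, (midN N p) ^ 2 ∂((μ.prod ν)[|accN N η Δ])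

def mid2 (p : ℝ × ℝ) : ℝ := (max p.1 p.2 + min p.1 p.2) / 2

def acc2 (η Δ : ℝ) : Set (ℝ × ℝ) := {p | max p.1 p.2 - min p.1 p.2 ≤ η * Δ}

def PA_2 (η Δ : ℝ) (μ κ : Measure ℝ) : ℝ := ((μ.prod κ) (acc2 η Δ)).toReal

def MSE_2 (η Δ : ℝ) (μ κ : Measure ℝ) : ℝ :=
  ∫ p, (mid2 p) ^ 2 ∂((μ.prod κ)[|acc2 η Δ])

def cN (N : ℕ) (η Δ : ℝ) (μ : Measure ℝ) (α : ℝ) : ℝ :=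
  sSup {r | ∃ ν : Measure (Fin (N-1) → ℝ), IsProbabilityMeasure ν ∧
    α ≤ PA_N N η Δ μ ν ∧ r = MSE_N N η Δ μ ν}

def c2 (η Δ : ℝ) (μ : Measure ℝ) (α : ℝ) : ℝ :=
  sSup {r | ∃ κ : Measure ℝ, IsProbabilityMeasure κ ∧
    α ≤ PA_2 η Δ μ κ ∧ r = MSE_2 η Δ μ κ}

def IsBestResponseN (N : ℕ) (η Δ : ℝ) (μ : Measure ℝ) (QAD : ℝ → ℝ → ℝ)
    (ν : Measure (Fin (N-1) → ℝ)) : Prop :=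
  IsProbabilityMeasure ν ∧ 0 < PA_N N η Δ μ ν ∧
    ∀ ν' : Measure (Fin (N-1) → ℝ), IsProbabilityMeasure ν' → 0 < PA_N N η Δ μ ν' →
      QAD (MSE_N N η Δ μ ν') (PA_N N η Δ μ ν') ≤ QAD (MSE_N N η Δ μ ν) (PA_N N η Δ μ ν)

def IsBestResponse2 (η Δ : ℝ) (μ : Measure ℝ) (QAD : ℝ → ℝ → ℝ) (κ : Measure ℝ) : Prop :=
  IsProbabilityMeasure κ ∧ 0 < PA_2 η Δ μ κ ∧
    ∀ κ' : Measure ℝ, IsProbabilityMeasure κ' → 0 < PA_2 η Δ μ κ' →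
      QAD (MSE_2 η Δ μ κ') (PA_2 η Δ μ κ') ≤ QAD (MSE_2 η Δ μ κ) (PA_2 η Δ μ κ)

lemma prod_smul_right' {α β : Type*} [MeasurableSpace α] [MeasurableSpace β]
    (μ : Measure α) (ν : Measure β) [SFinite ν] {c : ENNReal} (hc : c ≠ ⊤) :
    μ.prod (c • ν) = c • μ.prod ν := by
  ext s hs
  rw [Measure.prod_apply hs, Measure.smul_apply, smul_eq_mul, Measure.prod_apply hs,
    ← MeasureTheory.lintegral_const_mul' _ _ hc]
  simp

theorem stmt2 {N : ℕ} (hN : 2 ≤ N) {η Δ : ℝ} (hΔ : 0 < Δ) (hη : 2 ≤ η)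
    (μ : Measure ℝ) [IsProbabilityMeasure μ] (hμ : μ (Set.Icc (-Δ) Δ) = 1)
    (ν : Measure (Fin (N-1) → ℝ)) [IsProbabilityMeasure ν]
    (hpa : 0 < PA_N N η Δ μ ν)
    (D : Set (Fin (N-1) → ℝ)) (hD : D = {x | ∀ i j, |x i - x j| ≤ η * Δ}) :
    PA_N N η Δ μ ν ≤ (ν D).toReal ∧ 0 < (ν D).toReal ∧
      PA_N N η Δ μ (ν[|D]) = PA_N N η Δ μ ν / (ν D).toReal ∧
      PA_N N η Δ μ ν ≤ PA_N N η Δ μ (ν[|D]) ∧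
      MSE_N N η Δ μ (ν[|D]) = MSE_N N η Δ μ ν := by
  have hNpos : 0 < N - 1 := by omega
  haveI : Nonempty (Fin (N-1)) := ⟨⟨0, hNpos⟩⟩
  have hDm : MeasurableSet D := by
    have hEq : D = ⋂ i, ⋂ j, {x : Fin (N-1) → ℝ | |x i - x j| ≤ η * Δ} := by
      ext x; simp [hD, Set.mem_iInter]
    rw [hEq]
    exact MeasurableSet.iInter fun i => MeasurableSet.iInter fun j =>
      measurableSet_le (((measurable_pi_apply i).sub (measurable_pi_apply j)).abs)
        measurable_const
  have hsub : accN N η Δ ⊆ Set.univ ×ˢ D := by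
    rintro ⟨h, x⟩ hp
    have hbd : BddAbove (Set.range x) := Set.Finite.bddAbove (Set.finite_range x)
    have hbd' : BddBelow (Set.range x) := Set.Finite.bddBelow (Set.finite_range x)
    have hp' : max h (⨆ k, x k) - min h (⨅ k, x k) ≤ η * Δ := hp
    refine ⟨Set.mem_univ _, ?_⟩
    rw [hD]
    intro i j
    have h1 : x i ≤ ⨆ k, x k := le_ciSup hbd i
    have h1' : x j ≤ ⨆ k, x k := le_ciSup hbd j
    have h2 : ⨅ k, x k ≤ x j := ciInf_le hbd' j
    have h2' : ⨅ k, x k ≤ x i := ciInf_le hbd' i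
    have h3 : ⨆ k, x k ≤ max h (⨆ k, x k) := le_max_right _ _
    have h4 : min h (⨅ k, x k) ≤ ⨅ k, x k := min_le_right _ _
    rw [abs_sub_le_iff]
    constructor <;> linarith
  set m := μ.prod ν with hm
  set A := accN N η Δ with hA
  have hSm : MeasurableSet ((Set.univ : Set ℝ) ×ˢ D) := MeasurableSet.univ.prod hDm
  have hmD : m (Set.univ ×ˢ D) = ν D := by
    rw [hm, Measure.prod_prod]; simp
  have hle : m A ≤ ν D := hmD ▸ measure_mono hsub
  have hmA_ne_top : m A ≠ ⊤ := measure_ne_top m A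
  have hνD_ne_top : ν D ≠ ⊤ := measure_ne_top ν D
  have hmA_pos : 0 < m A := by
    rcases eq_or_lt_of_le (zero_le : 0 ≤ m A) with hz | hz
    · exfalso
      have : PA_N N η Δ μ ν = 0 := by
        simp [PA_N, ← hm, ← hA, ← hz]
      linarith [hpa, this]
    · exact hz
  have hνD_pos : 0 < ν D := lt_of_lt_of_le hmA_pos hle
  have hcinv_ne_top : (ν D)⁻¹ ≠ ⊤ := by
    simp [ENNReal.inv_ne_top, hνD_pos.ne']
  have hprod : μ.prod (ν[|D]) = (ν D)⁻¹ • m.restrict (Set.univ ×ˢ D) := by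
    rw [ProbabilityTheory.cond, prod_smul_right' μ _ hcinv_ne_top]
    congr 1
    rw [hm, ← Measure.prod_restrict, Measure.restrict_univ]
  have hinter : A ∩ (Set.univ ×ˢ D) = A := Set.inter_eq_left.mpr hsub
  have hPA' : (μ.prod (ν[|D])) A = (ν D)⁻¹ * m A := by
    rw [hprod, Measure.smul_apply, smul_eq_mul, Measure.restrict_apply' hSm, hinter]
  have htpos : 0 < (ν D).toReal := ENNReal.toReal_pos hνD_pos.ne' hνD_ne_top
  have hPAval : PA_N N η Δ μ (ν[|D]) = PA_N N η Δ μ ν / (ν D).toReal := by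
    show ((μ.prod (ν[|D])) A).toReal = (m A).toReal / (ν D).toReal
    rw [hPA', ENNReal.toReal_mul, ENNReal.toReal_inv, div_eq_mul_inv, mul_comm]
  refine ⟨?_, htpos, hPAval, ?_, ?_⟩
  · exact ENNReal.toReal_le_toReal hmA_ne_top hνD_ne_top |>.mpr hle
  · rw [hPAval, le_div_iff₀ htpos]
    have ht1 : (ν D).toReal ≤ 1 := by
      have := prob_le_one (μ := ν) (s := D)
      calc (ν D).toReal ≤ (1 : ENNReal).toReal :=
        ENNReal.toReal_le_toReal hνD_ne_top (by simp) |>.mpr this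
      _ = 1 := by simp
    nlinarith [hpa.le]
  · have hcond : (μ.prod (ν[|D]))[|A] = m[|A] := by
      have hPA2 : ((ν D)⁻¹ • m.restrict (Set.univ ×ˢ D)) A = (ν D)⁻¹ * m A := by
        rw [← hprod]; exact hPA'
      rw [hprod, ProbabilityTheory.cond, ProbabilityTheory.cond, hPA2,
        Measure.restrict_smul, Measure.restrict_restrict' hSm, hinter, smul_smul,
        ENNReal.mul_inv (Or.inl (by simp [hνD_ne_top])) (Or.inl hcinv_ne_top),
        inv_inv]
      congr 1
      rw [mul_comm (ν D), mul_assoc, ENNReal.mul_inv_cancel hνD_pos.ne' hνD_ne_top, mul_one]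
    show (∫ p, (midN N p) ^ 2 ∂((μ.prod (ν[|D]))[|A])) = ∫ p, (midN N p) ^ 2 ∂(m[|A])
    rw [hcond]
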